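/- arXiv:2206.09678 — 4 statements merged into one kernel-verified Lean document; each statement's English description precedes it below -/
import Mathlib

section
/- Let X and Y be jointly spacelike slices (i.e., X ∪ Y is spacelike) with X ∩ Y = ∅. Then X ∪ Y is both a categorical product and a categorical coproduct of X and Y in Slice, with projections π₀ = C[X] : X ∪ Y → X, π₁ = C[Y] : X ∪ Y → Y and coprojections i₀ = C[X] : X → X ∪ Y, i₁ = C[Y] : Y → X ∪ Y; the pairing of f : Z → X and f' : Z → Y is f ∪ f', and the copairing of g : X → Z and g' : Y → Z is g ∪ g'. -/
/-- An abstract setting of "points" and (future-directed causal) "curves",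
where a curve is presented by a parametrised path. -/
structure CausalSpace where
  Point : Type
  topology : TopologicalSpace Point
  Curve : Type
  dom : Curve → Set ℝ
  map : Curve → ℝ → Point

namespace CausalSpace

variable (G : CausalSpace)

/-- `γ` passes through `A` and then `B`. -/
def Passes (A B : Set G.Point) (γ : G.Curve) : Prop :=
  (∃ q ∈ G.dom γ, G.map γ q ∈ B) ∧
    ∀ q ∈ G.dom γ, G.map γ q ∈ B → ∃ p ∈ G.dom γ, p ≤ q ∧ G.map γ p ∈ A

/-- `C[A,B]`: the set of curves passing through `A` and then `B`. -/
def thru (A B : Set G.Point) : Set G.Curve := {γ | G.Passes A B γ}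

/-- Causal precedence: some future-directed causal curve goes from `x` to `y`. -/
def Prec (x y : G.Point) : Prop :=
  ∃ γ : G.Curve, ∃ p ∈ G.dom γ, ∃ q ∈ G.dom γ, p ≤ q ∧ G.map γ p = x ∧ G.map γ q = y

/-- A set is spacelike when no two distinct points of it are causally related. -/
def Spacelike (A : Set G.Point) : Prop :=
  ∀ x ∈ A, ∀ y ∈ A, x ≠ y → ¬ G.Prec x y

end CausalSpace

/-- A spacelike slice: a closed spacelike subset. -/
structure Slice (G : CausalSpace) where
  carrier : Set G.Point
  spacelike : G.Spacelike carrier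
  closed : @IsClosed G.Point G.topology carrier


namespace CausalSpace

/-- A curve that meets a set passes that set then itself. -/
lemma mem_thru_self (G : CausalSpace) {A : Set G.Point} {γ : G.Curve}
    (h : ∃ q ∈ G.dom γ, G.map γ q ∈ A) : γ ∈ G.thru A A := by
  refine ⟨h, fun q hq hqA => ⟨q, hq, le_refl q, hqA⟩⟩

/-- Separation: no curve meets both of two jointly spacelike disjoint sets. -/
lemma sep (G : CausalSpace) {X Y : Set G.Point}
    (hjs : G.Spacelike (X ∪ Y)) (hdisj : X ∩ Y = ∅) {γ : G.Curve}
    (hX : ∃ p ∈ G.dom γ, G.map γ p ∈ X) (hY : ∃ q ∈ G.dom γ, G.map γ q ∈ Y) : False := by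
  obtain ⟨p, hp, hpX⟩ := hX
  obtain ⟨q, hq, hqY⟩ := hY
  have hne : G.map γ p ≠ G.map γ q := by
    intro h
    have : G.map γ p ∈ X ∩ Y := ⟨hpX, h ▸ hqY⟩
    simp [hdisj] at this
  rcases le_total p q with hle | hle
  · exact hjs _ (Or.inl hpX) _ (Or.inr hqY) hne ⟨γ, p, hp, q, hq, hle, rfl, rfl⟩
  · exact hjs _ (Or.inr hqY) _ (Or.inl hpX) hne.symm ⟨γ, q, hq, p, hp, hle, rfl, rfl⟩

end CausalSpace

/-- If `X` and `Y` are jointly spacelike slices with `X ∩ Y = ∅`, then `X ∪ Y`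
is both a product and a coproduct of `X` and `Y` in `Slice`, with
(co)projections `C[X]` and `C[Y]`, pairing `f ∪ f'` and copairing `g ∪ g'`. -/
theorem slice_product_coproduct (G : CausalSpace) (X Y : Slice G)
    (hjs : G.Spacelike (X.carrier ∪ Y.carrier))
    (hdisj : X.carrier ∩ Y.carrier = ∅) :
    -- the (co)projections are well-typed morphisms
    (G.thru X.carrier X.carrier ⊆ G.thru (X.carrier ∪ Y.carrier) X.carrier) ∧
    (G.thru Y.carrier Y.carrier ⊆ G.thru (X.carrier ∪ Y.carrier) Y.carrier) ∧
    (G.thru X.carrier X.carrier ⊆ G.thru X.carrier (X.carrier ∪ Y.carrier)) ∧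
    (G.thru Y.carrier Y.carrier ⊆ G.thru Y.carrier (X.carrier ∪ Y.carrier)) ∧
    -- product universal property
    (∀ (Z : Slice G) (f f' : Set G.Curve),
      f ⊆ G.thru Z.carrier X.carrier → f' ⊆ G.thru Z.carrier Y.carrier →
      (f ∪ f' ⊆ G.thru Z.carrier (X.carrier ∪ Y.carrier)) ∧
      G.thru X.carrier X.carrier ∩ (f ∪ f') = f ∧
      G.thru Y.carrier Y.carrier ∩ (f ∪ f') = f' ∧
      ∀ u : Set G.Curve, u ⊆ G.thru Z.carrier (X.carrier ∪ Y.carrier) →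
        G.thru X.carrier X.carrier ∩ u = f → G.thru Y.carrier Y.carrier ∩ u = f' →
        u = f ∪ f') ∧
    -- coproduct universal property
    (∀ (Z : Slice G) (g g' : Set G.Curve),
      g ⊆ G.thru X.carrier Z.carrier → g' ⊆ G.thru Y.carrier Z.carrier →
      (g ∪ g' ⊆ G.thru (X.carrier ∪ Y.carrier) Z.carrier) ∧
      (g ∪ g') ∩ G.thru X.carrier X.carrier = g ∧
      (g ∪ g') ∩ G.thru Y.carrier Y.carrier = g' ∧
      ∀ v : Set G.Curve, v ⊆ G.thru (X.carrier ∪ Y.carrier) Z.carrier →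
        v ∩ G.thru X.carrier X.carrier = g → v ∩ G.thru Y.carrier Y.carrier = g' →
        v = g ∪ g') :=  by
  have sep' : ∀ γ : G.Curve, (∃ p ∈ G.dom γ, G.map γ p ∈ X.carrier) →
      (∃ q ∈ G.dom γ, G.map γ q ∈ Y.carrier) → False :=
    fun γ hX hY => G.sep hjs hdisj hX hY
  refine ⟨?_, ?_, ?_, ?_, ?_, ?_⟩
  · -- π₀ well typed
    rintro γ ⟨hex, hall⟩
    refine ⟨hex, fun q hq hqX => ?_⟩
    obtain ⟨p, hp, hle, hpX⟩ := hall q hq hqX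
    exact ⟨p, hp, hle, Or.inl hpX⟩
  · rintro γ ⟨hex, hall⟩
    refine ⟨hex, fun q hq hqY => ?_⟩
    obtain ⟨p, hp, hle, hpY⟩ := hall q hq hqY
    exact ⟨p, hp, hle, Or.inr hpY⟩
  · -- i₀ well typed
    rintro γ ⟨⟨q0, hq0, hq0X⟩, hall⟩
    refine ⟨⟨q0, hq0, Or.inl hq0X⟩, fun q hq hqXY => ?_⟩
    rcases hqXY with hqX | hqY
    · exact hall q hq hqX
    · exact absurd (sep' γ ⟨q0, hq0, hq0X⟩ ⟨q, hq, hqY⟩) not_false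
  · rintro γ ⟨⟨q0, hq0, hq0Y⟩, hall⟩
    refine ⟨⟨q0, hq0, Or.inr hq0Y⟩, fun q hq hqXY => ?_⟩
    rcases hqXY with hqX | hqY
    · exact absurd (sep' γ ⟨q, hq, hqX⟩ ⟨q0, hq0, hq0Y⟩) not_false
    · exact hall q hq hqY
  · -- product
    intro Z f f' hf hf'
    have hfX : ∀ γ ∈ f, ∃ q ∈ G.dom γ, G.map γ q ∈ X.carrier := fun γ hγ => (hf hγ).1
    have hf'Y : ∀ γ ∈ f', ∃ q ∈ G.dom γ, G.map γ q ∈ Y.carrier := fun γ hγ => (hf' hγ).1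
    refine ⟨?_, ?_, ?_, ?_⟩
    · rintro γ (hγ | hγ)
      · obtain ⟨hex, hall⟩ := hf hγ
        obtain ⟨q0, hq0, hq0X⟩ := hex
        refine ⟨⟨q0, hq0, Or.inl hq0X⟩, fun q hq hqXY => ?_⟩
        rcases hqXY with hqX | hqY
        · exact hall q hq hqX
        · exact absurd (sep' γ ⟨q0, hq0, hq0X⟩ ⟨q, hq, hqY⟩) not_false
      · obtain ⟨hex, hall⟩ := hf' hγ
        obtain ⟨q0, hq0, hq0Y⟩ := hex
        refine ⟨⟨q0, hq0, Or.inr hq0Y⟩, fun q hq hqXY => ?_⟩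
        rcases hqXY with hqX | hqY
        · exact absurd (sep' γ ⟨q, hq, hqX⟩ ⟨q0, hq0, hq0Y⟩) not_false
        · exact hall q hq hqY
    · apply Set.eq_of_subset_of_subset
      · rintro γ ⟨hγXX, hγ | hγ⟩
        · exact hγ
        · exact absurd (sep' γ hγXX.1 (hf'Y γ hγ)) not_false
      · intro γ hγ
        exact ⟨G.mem_thru_self (hfX γ hγ), Or.inl hγ⟩
    · apply Set.eq_of_subset_of_subset
      · rintro γ ⟨hγYY, hγ | hγ⟩
        · exact absurd (sep' γ (hfX γ hγ) hγYY.1) not_false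
        · exact hγ
      · intro γ hγ
        exact ⟨G.mem_thru_self (hf'Y γ hγ), Or.inr hγ⟩
    · intro u hu hu1 hu2
      apply Set.eq_of_subset_of_subset
      · intro γ hγ
        obtain ⟨⟨q0, hq0, hq0XY⟩, _⟩ := hu hγ
        rcases hq0XY with hq0X | hq0Y
        · exact Or.inl (hu1 ▸ (⟨G.mem_thru_self ⟨q0, hq0, hq0X⟩, hγ⟩ :
            γ ∈ G.thru X.carrier X.carrier ∩ u))
        · exact Or.inr (hu2 ▸ (⟨G.mem_thru_self ⟨q0, hq0, hq0Y⟩, hγ⟩ :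
            γ ∈ G.thru Y.carrier Y.carrier ∩ u))
      · rintro γ (hγ | hγ)
        · exact (hu1 ▸ hγ : γ ∈ _ ∩ u).2
        · exact (hu2 ▸ hγ : γ ∈ _ ∩ u).2
  · -- coproduct
    intro Z g g' hg hg'
    have hgX : ∀ γ ∈ g, ∃ p ∈ G.dom γ, G.map γ p ∈ X.carrier := by
      intro γ hγ
      obtain ⟨⟨q0, hq0, hq0Z⟩, hall⟩ := hg hγ
      obtain ⟨p, hp, _, hpX⟩ := hall q0 hq0 hq0Z
      exact ⟨p, hp, hpX⟩
    have hg'Y : ∀ γ ∈ g', ∃ p ∈ G.dom γ, G.map γ p ∈ Y.carrier := by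
      intro γ hγ
      obtain ⟨⟨q0, hq0, hq0Z⟩, hall⟩ := hg' hγ
      obtain ⟨p, hp, _, hpY⟩ := hall q0 hq0 hq0Z
      exact ⟨p, hp, hpY⟩
    refine ⟨?_, ?_, ?_, ?_⟩
    · rintro γ (hγ | hγ)
      · obtain ⟨hex, hall⟩ := hg hγ
        refine ⟨hex, fun q hq hqZ => ?_⟩
        obtain ⟨p, hp, hle, hpX⟩ := hall q hq hqZ
        exact ⟨p, hp, hle, Or.inl hpX⟩
      · obtain ⟨hex, hall⟩ := hg' hγ
        refine ⟨hex, fun q hq hqZ => ?_⟩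
        obtain ⟨p, hp, hle, hpY⟩ := hall q hq hqZ
        exact ⟨p, hp, hle, Or.inr hpY⟩
    · apply Set.eq_of_subset_of_subset
      · rintro γ ⟨hγ | hγ, hγXX⟩
        · exact hγ
        · exact absurd (sep' γ hγXX.1 (hg'Y γ hγ)) not_false
      · intro γ hγ
        exact ⟨Or.inl hγ, G.mem_thru_self (hgX γ hγ)⟩
    · apply Set.eq_of_subset_of_subset
      · rintro γ ⟨hγ | hγ, hγYY⟩
        · exact absurd (sep' γ (hgX γ hγ) hγYY.1) not_false
        · exact hγ
      · intro γ hγ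
        exact ⟨Or.inr hγ, G.mem_thru_self (hg'Y γ hγ)⟩
    · intro v hv hv1 hv2
      apply Set.eq_of_subset_of_subset
      · intro γ hγ
        obtain ⟨⟨q0, hq0, hq0Z⟩, hall⟩ := hv hγ
        obtain ⟨p, hp, _, hpXY⟩ := hall q0 hq0 hq0Z
        rcases hpXY with hpX | hpY
        · exact Or.inl (hv1 ▸ (⟨hγ, G.mem_thru_self ⟨p, hp, hpX⟩⟩ :
            γ ∈ v ∩ G.thru X.carrier X.carrier))
        · exact Or.inr (hv2 ▸ (⟨hγ, G.mem_thru_self ⟨p, hp, hpY⟩⟩ :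
            γ ∈ v ∩ G.thru Y.carrier Y.carrier))
      · rintro γ (hγ | hγ)
        · exact (hv1 ▸ hγ : γ ∈ v ∩ _).1
        · exact (hv2 ▸ hγ : γ ∈ v ∩ _).1
end

section
/- If X and Y are jointly spacelike slices, then for every slice Z one has C[Z,X] ∩ C[Z,Y] = C[Z, X ∩ Y], and hence the presheaf (X ⊛∧ Y)(−) = P(C[−,X] ∩ C[−,Y]) is representable, represented by the slice X ∩ Y: (X ⊛∧ Y)(Z) = Slice(Z, X ∩ Y). -/
/-- If `X` and `Y` are jointly spacelike slices then `X ∩ Y` is again a slice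
and for every slice `Z`, `C[Z,X] ∩ C[Z,Y] = C[Z, X ∩ Y]`; hence the presheaf
`(X ⊛∧ Y)(−) = 𝒫(C[−,X] ∩ C[−,Y])` is representable, represented by `X ∩ Y`. -/
theorem conj_representable_of_jointly_spacelike (G : CausalSpace) (X Y : Slice G)
    (hjs : G.Spacelike (X.carrier ∪ Y.carrier)) :
    G.Spacelike (X.carrier ∩ Y.carrier) ∧
    @IsClosed G.Point G.topology (X.carrier ∩ Y.carrier) ∧
    ∀ Z : Slice G,
      G.thru Z.carrier X.carrier ∩ G.thru Z.carrier Y.carrier =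
        G.thru Z.carrier (X.carrier ∩ Y.carrier) := by
  -- key: two points of X ∪ Y on the same curve are equal
  have key : ∀ (γ : G.Curve) (p q : ℝ), p ∈ G.dom γ → q ∈ G.dom γ → p ≤ q →
      G.map γ p ∈ X.carrier ∪ Y.carrier → G.map γ q ∈ X.carrier ∪ Y.carrier →
      G.map γ p = G.map γ q := by
    intro γ p q hp hq hpq hpX hqY
    by_contra hne
    exact hjs _ hpX _ hqY hne ⟨γ, p, hp, q, hq, hpq, rfl, rfl⟩
  refine ⟨fun x hx y hy => hjs x (Or.inl hx.1) y (Or.inl hy.1),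
    (letI := G.topology; X.closed.inter Y.closed), fun Z => ?_⟩
  ext γ
  constructor
  · rintro ⟨⟨⟨q₁, hq₁, hq₁X⟩, hX⟩, ⟨⟨q₂, hq₂, hq₂Y⟩, hY⟩⟩
    have hmem : ∃ q ∈ G.dom γ, G.map γ q ∈ X.carrier ∩ Y.carrier := by
      rcases le_total q₁ q₂ with h | h
      · have := key γ q₁ q₂ hq₁ hq₂ h (Or.inl hq₁X) (Or.inr hq₂Y)
        exact ⟨q₁, hq₁, hq₁X, this ▸ hq₂Y⟩
      · have := key γ q₂ q₁ hq₂ hq₁ h (Or.inr hq₂Y) (Or.inl hq₁X)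
        exact ⟨q₁, hq₁, hq₁X, this ▸ hq₂Y⟩
    exact ⟨hmem, fun q hq hqXY => hX q hq hqXY.1⟩
  · rintro ⟨⟨q₀, hq₀, hq₀XY⟩, hXY⟩
    constructor
    · refine ⟨⟨q₀, hq₀, hq₀XY.1⟩, fun q hq hqX => ?_⟩
      rcases le_total q₀ q with h | h
      · rcases hXY q₀ hq₀ hq₀XY with ⟨p, hp, hpq, hpZ⟩
        exact ⟨p, hp, hpq.trans h, hpZ⟩
      · have := key γ q q₀ hq hq₀ h (Or.inl hqX) (Or.inl hq₀XY.1)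
        exact hXY q hq (this ▸ hq₀XY)
    · refine ⟨⟨q₀, hq₀, hq₀XY.2⟩, fun q hq hqY => ?_⟩
      rcases le_total q₀ q with h | h
      · rcases hXY q₀ hq₀ hq₀XY with ⟨p, hp, hpq, hpZ⟩
        exact ⟨p, hp, hpq.trans h, hpZ⟩
      · have := key γ q q₀ hq hq₀ h (Or.inr hqY) (Or.inr hq₀XY.2)
        exact hXY q hq (this ▸ hq₀XY)
end

section
/- Neither Slice nor Space is monoidal under intersection of objects and morphisms: if X and Y are causally connected slices (C[X,Y] ≠ ∅) with X ∩ Y = ∅, then 1_X ⊗ 1_Y := C[X,X] ∩ C[Y,Y] ≠ ∅ while 1_{X ∩ Y} = 1_∅ = ∅, so the proposed tensor fails to preserve identities. -/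
/-- Neither `Slice` nor `Space` is monoidal under intersection: if `X` and `Y`
are causally connected slices (`C[X,Y] ≠ ∅`) with `X ∩ Y = ∅`, then
`1_X ⊗ 1_Y = C[X,X] ∩ C[Y,Y] ≠ ∅` while `1_{X ∩ Y} = 1_∅ = ∅`. -/
theorem intersection_not_monoidal (G : CausalSpace) (X Y : Slice G)
    (hconn : G.thru X.carrier Y.carrier ≠ ∅)
    (hdisj : X.carrier ∩ Y.carrier = ∅) :
    G.thru X.carrier X.carrier ∩ G.thru Y.carrier Y.carrier ≠ ∅ ∧
    G.thru (X.carrier ∩ Y.carrier) (X.carrier ∩ Y.carrier) = ∅ := by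
  constructor
  · obtain ⟨γ, hγ⟩ := Set.nonempty_iff_ne_empty.2 hconn
    obtain ⟨⟨q, hq, hqY⟩, h2⟩ := hγ
    obtain ⟨p, hp, hpq, hpX⟩ := h2 q hq hqY
    intro h
    have : γ ∈ G.thru X.carrier X.carrier ∩ G.thru Y.carrier Y.carrier := by
      refine ⟨⟨⟨p, hp, hpX⟩, ?_⟩, ⟨⟨q, hq, hqY⟩, ?_⟩⟩
      · exact fun r hr hrX => ⟨r, hr, le_refl r, hrX⟩
      · exact fun r hr hrY => ⟨r, hr, le_refl r, hrY⟩
    rw [h] at this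
    exact this
  · rw [hdisj]
    ext γ
    simp only [Set.mem_empty_iff_false, iff_false]
    rintro ⟨⟨q, hq, hqB⟩, -⟩
    exact hqB
end

section
/- The assignments (X,Y) ↦ (X ⊛∨ Y)(−) with left action S ↦ (C ↦ C ∩ (S ∪ C[Y])) and right action T ↦ (C ↦ C ∩ (C[X] ∪ T)) are functorial in each variable separately: (S' ⊛∨ Y) ∘ (S ⊛∨ Y) = (S'∘S) ⊛∨ Y and (X ⊛∨ T') ∘ (X ⊛∨ T) = X ⊛∨ (T'∘T), and identities act as identities; hence they define a functor Slice □ Slice → [Sliceᵒᵖ, Set] out of the funny tensor product. -/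
/-- The left action `S ↦ (C ↦ C ∩ (S ∪ C[Y]))` and right action
`T ↦ (C ↦ C ∩ (C[X] ∪ T))` on `(X ⊛∨ Y)(Z) = 𝒫(C[Z,X] ∪ C[Z,Y])` are
functorial in each variable separately, with identities acting as identities;
hence they define a functor `Slice □ Slice → [Sliceᵒᵖ, Set]` out of the funny
tensor product of `Slice` with itself. -/
theorem disj_funny_functor (G : CausalSpace) (X Y : Slice G) :
    -- identities act as identities (1_X ⊛∨ Y and X ⊛∨ 1_Y are both C ↦ C ∩ (C[X] ∪ C[Y]))
    (∀ Z : Slice G, ∀ C : Set G.Curve,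
      C ⊆ G.thru Z.carrier X.carrier ∪ G.thru Z.carrier Y.carrier →
        C ∩ (G.thru X.carrier X.carrier ∪ G.thru Y.carrier Y.carrier) = C) ∧
    -- functoriality of the left action: (S' ⊛∨ Y) ∘ (S ⊛∨ Y) = (S'∘S) ⊛∨ Y
    (∀ (X' X'' : Slice G) (S S' : Set G.Curve),
      S ⊆ G.thru X.carrier X'.carrier → S' ⊆ G.thru X'.carrier X''.carrier →
      ∀ Z : Slice G, ∀ C : Set G.Curve,
        C ⊆ G.thru Z.carrier X.carrier ∪ G.thru Z.carrier Y.carrier →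
          (C ∩ (S ∪ G.thru Y.carrier Y.carrier)) ∩ (S' ∪ G.thru Y.carrier Y.carrier) =
            C ∩ ((S' ∩ S) ∪ G.thru Y.carrier Y.carrier)) ∧
    -- functoriality of the right action: (X ⊛∨ T') ∘ (X ⊛∨ T) = X ⊛∨ (T'∘T)
    (∀ (Y' Y'' : Slice G) (T T' : Set G.Curve),
      T ⊆ G.thru Y.carrier Y'.carrier → T' ⊆ G.thru Y'.carrier Y''.carrier →
      ∀ Z : Slice G, ∀ C : Set G.Curve,
        C ⊆ G.thru Z.carrier X.carrier ∪ G.thru Z.carrier Y.carrier →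
          (C ∩ (G.thru X.carrier X.carrier ∪ T)) ∩ (G.thru X.carrier X.carrier ∪ T') =
            C ∩ (G.thru X.carrier X.carrier ∪ (T' ∩ T))) := by
  have thru_self : ∀ (A B : Set G.Point) γ, γ ∈ G.thru A B → γ ∈ G.thru B B := by
    rintro A B γ ⟨⟨q, hq, hqB⟩, _⟩
    exact ⟨⟨q, hq, hqB⟩, fun r hr hrB => ⟨r, hr, le_refl r, hrB⟩⟩
  refine ⟨?_, ?_, ?_⟩
  · intro Z C hC
    apply Set.inter_eq_left.mpr
    intro γ hγ
    rcases hC hγ with h | h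
    · exact Or.inl (thru_self _ _ _ h)
    · exact Or.inr (thru_self _ _ _ h)
  · intro X' X'' S S' _ _ Z C _
    rw [Set.inter_assoc]; ext γ; simp only [Set.mem_inter_iff, Set.mem_union]; tauto
  · intro Y' Y'' T T' _ _ Z C _
    rw [Set.inter_assoc]; ext γ; simp only [Set.mem_inter_iff, Set.mem_union]; tauto
end
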